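/- If u ≠ 0 and 4uv − c²w² = 0 and 4uw − c²v² = 0 but (u,v,w) corresponds to a point where Q has rank ≥ 2, then 2cu² − c²vw ≠ 0. -/

import Mathlib

open Matrix

/-- If `u ≠ 0`, `4uv − c²w² = 0` and `4uw − c²v² = 0`, but the Sklyanin
Clifford matrix `Q` at `(u,v,w)` has rank at least `2`, then
`2cu² − c²vw ≠ 0`. -/
theorem case_two_pivot_nonzero (c u v w : ℂ) (hc : c ≠ 0) (hu : u ≠ 0)
    (h1 : 4 * u * v - c ^ 2 * w ^ 2 = 0)
    (h2 : 4 * u * w - c ^ 2 * v ^ 2 = 0)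
    (hrk : 2 ≤ (!![2 * u, c * w, c * v;
                   c * w, 2 * v, c * u;
                   c * v, c * u, 2 * w] : Matrix (Fin 3) (Fin 3) ℂ).rank) :
    2 * c * u ^ 2 - c ^ 2 * v * w ≠ 0 := by
  intro h
  have key : (!![2 * u, c * w, c * v;
                 c * w, 2 * v, c * u;
                 c * v, c * u, 2 * w] : Matrix (Fin 3) (Fin 3) ℂ) =
      (!![2 * u; c * w; c * v] : Matrix (Fin 3) (Fin 1) ℂ) *
      (!![1, c * w / (2 * u), c * v / (2 * u)] : Matrix (Fin 1) (Fin 3) ℂ) := by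
    ext i j
    fin_cases i <;> fin_cases j <;>
      simp [Matrix.mul_apply, Fin.sum_univ_succ]
    all_goals field_simp
    all_goals first
      | linear_combination h1
      | linear_combination h2
      | linear_combination h
      | (apply mul_left_cancel₀ hc; linear_combination h)
  have hle := (key ▸ Matrix.rank_mul_le_left (!![2 * u; c * w; c * v])
      (!![1, c * w / (2 * u), c * v / (2 * u)]))
  have h1' : (!![2 * u; c * w; c * v] : Matrix (Fin 3) (Fin 1) ℂ).rank ≤ 1 := by
    simpa using Matrix.rank_le_card_width (!![2 * u; c * w; c * v] : Matrix (Fin 3) (Fin 1) ℂ)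
  omega
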